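/- arXiv:2412.19366 — 4 statements merged into one kernel-verified Lean document; each statement's English description precedes it below -/
import Mathlib

section
/- Let μ₁, μ₂ be probability measures on ℝ^d with μ₂ absolutely continuous with respect to μ₁, and suppose the Radon–Nikodym derivative dμ₂/dμ₁ is essentially bounded with essential supremum K < ∞ (note K ≥ 1 always). Then KL(μ₂ ∥ μ₁) ≤ (1/2) · (log K / (1 − 1/K)) · |μ₂ − μ₁|_TV (reverse Pinsker inequality). -/
open MeasureTheory Real

lemma aux_pointwise {K t : ℝ} (hK : 1 < K) (ht0 : 0 ≤ t) (htK : t ≤ K) :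
    t * Real.log t ≤ (K * Real.log K / (K - 1)) * max (t - 1) 0 := by
  rcases le_or_gt t 1 with h | h
  · rw [max_eq_right (by linarith), mul_zero]
    exact Real.mul_log_nonpos ht0 h
  · rw [max_eq_left (by linarith)]
    have hK1 : (0:ℝ) < K - 1 := by linarith
    set a : ℝ := (K - t) / (K - 1) with ha_def
    set b : ℝ := (t - 1) / (K - 1) with hb_def
    have ha : 0 ≤ a := div_nonneg (by linarith) hK1.le
    have hb : 0 ≤ b := div_nonneg (by linarith) hK1.le
    have hab : a + b = 1 := by rw [ha_def, hb_def, ← add_div]; field_simp; ring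
    have hcv := Real.convexOn_mul_log.2 (Set.mem_Ici.mpr zero_le_one)
      (Set.mem_Ici.mpr (by linarith : (0:ℝ) ≤ K)) ha hb hab
    norm_num at hcv
    have ht : a + b * K = t := by
      rw [ha_def, hb_def]
      field_simp
      ring
    rw [ht] at hcv
    calc t * Real.log t ≤ b * (K * Real.log K) := hcv
      _ = K * Real.log K / (K - 1) * (t - 1) := by rw [hb_def]; ring

lemma aux_norm_bound {K t : ℝ} (hK : 1 ≤ K) (ht0 : 0 ≤ t) (htK : t ≤ K) :
    ‖t * Real.log t‖ ≤ 1 + K * Real.log K := by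
  have hKlog : 0 ≤ K * Real.log K := Real.mul_log_nonneg hK
  rcases le_or_gt t 1 with h | h
  · rcases eq_or_lt_of_le ht0 with h0 | h0
    · simp [← h0]; linarith
    · have := Real.abs_log_mul_self_lt t h0 h
      rw [Real.norm_eq_abs, mul_comm]
      linarith [this]
  · rw [Real.norm_eq_abs, abs_of_nonneg (Real.mul_log_nonneg h.le)]
    have : t * Real.log t ≤ K * Real.log K :=
      mul_le_mul htK (Real.log_le_log (by linarith) htK) (Real.log_nonneg h.le) (by linarith)
    linarith

/-- Reverse Pinsker inequality. -/
theorem reverse_pinsker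
    {d : ℕ} (μ₁ μ₂ : Measure (Fin d → ℝ))
    [IsProbabilityMeasure μ₁] [IsProbabilityMeasure μ₂]
    (hac : μ₂ ≪ μ₁) (K : ℝ) (hK1 : 1 ≤ K)
    (hbound : ∀ᵐ x ∂μ₁, (μ₂.rnDeriv μ₁ x).toReal ≤ K) :
    ∫ x, Real.log ((μ₂.rnDeriv μ₁ x).toReal) ∂μ₂ ≤
      (1 / 2) * (Real.log K / (1 - 1 / K)) *
        ∫ x, |(μ₂.rnDeriv μ₁ x).toReal - 1| ∂μ₁ := by
  set f : (Fin d → ℝ) → ℝ := fun x => (μ₂.rnDeriv μ₁ x).toReal with hf_def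
  have hfm : Measurable f := (Measure.measurable_rnDeriv μ₂ μ₁).ennreal_toReal
  have hf0 : ∀ x, 0 ≤ f x := fun x => ENNReal.toReal_nonneg
  have hf_int : Integrable f μ₁ := Measure.integrable_toReal_rnDeriv
  have hmean : ∫ x, f x ∂μ₁ = 1 := by
    rw [hf_def, Measure.integral_toReal_rnDeriv hac]
    simp
  have hsub_int : Integrable (fun x => f x - 1) μ₁ := hf_int.sub (integrable_const 1)
  have hsub_mean : ∫ x, (f x - 1) ∂μ₁ = 0 := by
    rw [integral_sub hf_int (integrable_const 1), hmean]
    simp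
  rcases eq_or_lt_of_le hK1 with hK | hK
  · -- K = 1
    subst hK
    have hone : f =ᵐ[μ₁] fun _ => 1 := by
      have h0 : ∫ x, (1 - f x) ∂μ₁ = 0 := by
        rw [integral_sub (integrable_const 1) hf_int, hmean]; simp
      have hnn : 0 ≤ᵐ[μ₁] fun x => 1 - f x := by
        filter_upwards [hbound] with x hx
        simp only [Pi.zero_apply]; linarith
      have := (integral_eq_zero_iff_of_nonneg_ae hnn
        ((integrable_const 1).sub hf_int)).mp h0
      filter_upwards [this] with x hx
      simp only [Pi.zero_apply] at hx ⊢
      linarith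
    have hL : ∫ x, Real.log (f x) ∂μ₂ = 0 := by
      have : (fun x => Real.log (f x)) =ᵐ[μ₂] fun _ => 0 := by
        filter_upwards [hac.ae_le hone] with x hx
        simp [hx]
      rw [integral_congr_ae this]; simp
    rw [hL]
    simp
  · -- K > 1
    have hKpos : (0:ℝ) < K := by linarith
    have hK1pos : (0:ℝ) < K - 1 := by linarith
    -- rewrite LHS as integral against μ₁
    have hL : ∫ x, Real.log (f x) ∂μ₂ = ∫ x, f x * Real.log (f x) ∂μ₁ := by
      haveI : μ₂.HaveLebesgueDecomposition μ₁ := Measure.haveLebesgueDecomposition_of_sigmaFinite μ₂ μ₁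
      rw [← MeasureTheory.integral_rnDeriv_smul hac (f := fun x => Real.log (f x))]
      simp [smul_eq_mul, hf_def]
    have hflogf_int : Integrable (fun x => f x * Real.log (f x)) μ₁ := by
      refine Integrable.mono' (integrable_const (1 + K * Real.log K))
        (hfm.mul (hfm.log)).aestronglyMeasurable ?_
      filter_upwards [hbound] with x hx
      exact aux_norm_bound hK1 (hf0 x) hx
    have hmax_int : Integrable (fun x => max (f x - 1) 0) μ₁ := hsub_int.pos_part
    have hpt : ∀ᵐ x ∂μ₁,
        f x * Real.log (f x) ≤ (K * Real.log K / (K - 1)) * max (f x - 1) 0 := by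
      filter_upwards [hbound] with x hx
      exact aux_pointwise hK (hf0 x) hx
    have hstep : ∫ x, f x * Real.log (f x) ∂μ₁ ≤
        (K * Real.log K / (K - 1)) * ∫ x, max (f x - 1) 0 ∂μ₁ := by
      rw [← integral_const_mul]
      exact integral_mono_ae hflogf_int (hmax_int.const_mul _) hpt
    have habs_int : Integrable (fun x => |f x - 1|) μ₁ := hsub_int.abs
    have hmax_eq : ∫ x, max (f x - 1) 0 ∂μ₁ = (∫ x, |f x - 1| ∂μ₁) / 2 := by
      have heq : (fun x => max (f x - 1) 0) = fun x => ((f x - 1) + |f x - 1|) / 2 := by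
        funext x
        rcases le_total (f x - 1) 0 with h | h
        · rw [max_eq_right h, abs_of_nonpos h]; ring
        · rw [max_eq_left h, abs_of_nonneg h]; ring
      rw [heq, integral_div, integral_add hsub_int habs_int, hsub_mean, zero_add]
    rw [hL]
    calc ∫ x, f x * Real.log (f x) ∂μ₁
        ≤ (K * Real.log K / (K - 1)) * ∫ x, max (f x - 1) 0 ∂μ₁ := hstep
      _ = (1 / 2) * (Real.log K / (1 - 1 / K)) * ∫ x, |f x - 1| ∂μ₁ := by
          rw [hmax_eq]
          have h1 : Real.log K / (1 - 1 / K) = K * Real.log K / (K - 1) := by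
            have h2 : 1 - 1 / K = (K - 1) / K := by field_simp
            rw [h2, div_div_eq_mul_div, mul_comm]
          rw [h1]
          ring
end

section
/- Let w, a ∈ ℝ^d with λ = ⟨w, a⟩ ≠ 0 and b ∈ ℝ, and define the flow map Φ_t(x) = exp(t w aᵀ)x + (b/λ)(e^{tλ} − 1)w on the half-space H = {x : ⟨a, x⟩ + b > 0}. Then Φ_t maps H bijectively onto H, its inverse is Φ_{−t} restricted to H, and det(DΦ_t) = e^{tλ}. -/
open Matrix

attribute [local instance] Matrix.linftyOpNormedRing Matrix.linftyOpNormedAlgebra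

lemma vecMulVec_sq {d : ℕ} (w a : Fin d → ℝ) :
    vecMulVec w a * vecMulVec w a = (a ⬝ᵥ w) • vecMulVec w a := by
  ext i j
  simp [vecMulVec_apply, mul_apply, dotProduct, Finset.mul_sum, Finset.sum_mul]
  ring_nf
  exact Finset.sum_congr rfl fun k _ => by ring

lemma exp_smul_vecMulVec {d : ℕ} (w a : Fin d → ℝ) (hwa : a ⬝ᵥ w ≠ 0) (s : ℝ) :
    NormedSpace.exp (s • vecMulVec w a)
      = 1 + ((Real.exp (s * (a ⬝ᵥ w)) - 1) / (a ⬝ᵥ w)) • vecMulVec w a := by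
  set lam := a ⬝ᵥ w with hlam
  set M := vecMulVec w a with hM
  have hpow : ∀ n : ℕ, (s • M) ^ (n + 1) = (s ^ (n + 1) * lam ^ n) • M := by
    intro n
    induction n with
    | zero => simp
    | succ n ih =>
      rw [pow_succ, ih, smul_mul_assoc, mul_smul_comm, hM, vecMulVec_sq, ← hlam, ← hM]
      rw [smul_smul, smul_smul]
      ring_nf
  have hsum : Summable fun n : ℕ => ((Nat.factorial n : ℝ))⁻¹ • (s • M) ^ n :=
    NormedSpace.expSeries_summable' (𝕂 := ℝ) (s • M)
  rw [NormedSpace.exp_eq_tsum (𝕂 := ℝ)]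
  beta_reduce
  rw [Summable.tsum_eq_zero_add hsum]
  simp only [pow_zero, Nat.factorial_zero, Nat.cast_one, inv_one, one_smul, hpow, smul_smul]
  congr 1
  have hrsum : Summable fun n : ℕ => ((Nat.factorial n : ℝ))⁻¹ • (s * lam) ^ n :=
    NormedSpace.expSeries_summable' (𝕂 := ℝ) (s * lam)
  have hexp : Real.exp (s * lam) = ∑' n : ℕ, ((Nat.factorial n : ℝ))⁻¹ • (s * lam) ^ n := by
    rw [Real.exp_eq_exp_ℝ, NormedSpace.exp_eq_tsum (𝕂 := ℝ)]
  have h1 : Real.exp (s * lam) - 1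
      = ∑' n : ℕ, ((Nat.factorial (n+1) : ℝ))⁻¹ • (s * lam) ^ (n + 1) := by
    rw [hexp, Summable.tsum_eq_zero_add hrsum]
    simp
  rw [Summable.tsum_smul_const]
  · congr 1
    rw [h1, eq_div_iff hwa, ← tsum_mul_right]
    refine tsum_congr fun n => ?_
    simp only [smul_eq_mul]
    field_simp
    ring
  · have h := (((summable_nat_add_iff 1).mpr hrsum).mul_right lam⁻¹)
    refine h.congr fun n => ?_
    simp only [smul_eq_mul]
    field_simp
    ring

lemma vecMulVec_mulVec' {d : ℕ} (w a x : Fin d → ℝ) :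
    (vecMulVec w a).mulVec x = (a ⬝ᵥ x) • w := by
  ext i
  simp [mulVec, vecMulVec_apply, dotProduct, Finset.mul_sum, Finset.sum_mul, mul_comm, mul_assoc]
  exact Finset.sum_congr rfl fun k _ => by ring

/-- The flow map Φₜ(x) = exp(t w aᵀ)x + (b/λ)(e^{tλ}−1)w maps the half-space
H = {x : ⟨a,x⟩ + b > 0} bijectively onto itself, with inverse Φ₋ₜ, and the
determinant of its Jacobian exp(t w aᵀ) equals e^{tλ}. -/
theorem halfspace_flow_bijection
    {d : ℕ} (w a : Fin d → ℝ) (b : ℝ) (hwa : w ⬝ᵥ a ≠ 0) (t : ℝ) :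
    let lam := w ⬝ᵥ a
    let Φ : ℝ → (Fin d → ℝ) → (Fin d → ℝ) := fun s x =>
      (NormedSpace.exp (s • Matrix.vecMulVec w a)).mulVec x +
        ((b / lam) * (Real.exp (s * lam) - 1)) • w
    let H : Set (Fin d → ℝ) := {x | 0 < a ⬝ᵥ x + b}
    Set.BijOn (Φ t) H H ∧
      (∀ x ∈ H, Φ (-t) (Φ t x) = x) ∧
      (NormedSpace.exp (t • Matrix.vecMulVec w a)).det = Real.exp (t * lam) := by
  intro lam Φ H
  have hlam : lam = a ⬝ᵥ w := dotProduct_comm w a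
  have hl : a ⬝ᵥ w ≠ 0 := by rwa [← dotProduct_comm] at hwa
  have hl' : lam ≠ 0 := hwa
  have hΦ : ∀ s x, Φ s x = x + ((Real.exp (s * lam) - 1) / lam * (a ⬝ᵥ x + b)) • w := by
    intro s x
    show (NormedSpace.exp (s • vecMulVec w a)).mulVec x
        + ((b / lam) * (Real.exp (s * lam) - 1)) • w = _
    rw [show s • vecMulVec w a = s • vecMulVec w a from rfl, exp_smul_vecMulVec w a hl s,
      ← hlam, add_mulVec, one_mulVec, smul_mulVec, vecMulVec_mulVec', add_assoc,
      smul_smul, ← add_smul]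
    congr 1
    field_simp
  have hdot : ∀ s x, a ⬝ᵥ Φ s x + b = Real.exp (s * lam) * (a ⬝ᵥ x + b) := by
    intro s x
    rw [hΦ, dotProduct_add, dotProduct_smul, smul_eq_mul, ← hlam]
    field_simp
    ring
  have hinv : ∀ s x, Φ (-s) (Φ s x) = x := by
    intro s x
    rw [hΦ, hdot, hΦ]
    have he : Real.exp (-s * lam) = (Real.exp (s * lam))⁻¹ := by
      rw [neg_mul, Real.exp_neg]
    have hz : (Real.exp (s * lam) - 1) / lam * (a ⬝ᵥ x + b) +
        (Real.exp (-s * lam) - 1) / lam * (Real.exp (s * lam) * (a ⬝ᵥ x + b)) = 0 := by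
      rw [he]
      field_simp
      ring
    rw [add_assoc, ← add_smul, hz, zero_smul, add_zero]
  have hmaps : ∀ s, Set.MapsTo (Φ s) H H := by
    intro s x hx
    have : 0 < a ⬝ᵥ x + b := hx
    show 0 < a ⬝ᵥ Φ s x + b
    rw [hdot]
    positivity
  refine ⟨⟨hmaps t, fun x _ y _ h => ?_, fun y hy => ⟨Φ (-t) y, hmaps (-t) hy, ?_⟩⟩,
    fun x _ => hinv t x, ?_⟩
  · have := congrArg (Φ (-t)) h
    rwa [hinv, hinv] at this
  · simpa using hinv (-t) y
  · rw [show t • vecMulVec w a = t • vecMulVec w a from rfl, exp_smul_vecMulVec w a hl t, ← hlam]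
    have hc : ((Real.exp (t * lam) - 1) / lam) • vecMulVec w a
        = vecMulVec (((Real.exp (t * lam) - 1) / lam) • w) a := by
      ext i j
      simp [vecMulVec_apply, mul_assoc]
    rw [hc, vecMulVec_eq Unit, det_one_add_replicateCol_mul_replicateRow, dotProduct_smul, smul_eq_mul, ← hlam]
    field_simp
    ring
end

section
/- Let σ : ℝ → ℝ be Lipschitz and strictly increasing, extended componentwise to ℝ^d, let d ≥ n ≥ 1, and let μ be a probability measure on ℝ^d absolutely continuous with respect to Lebesgue measure. If y⁽¹⁾, …, y⁽ⁿ⁾ are sampled i.i.d. from μ, then with probability 1 the vectors σ(y⁽¹⁾), …, σ(y⁽ⁿ⁾) are linearly independent in ℝ^d. -/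
open MeasureTheory

lemma lemB {d : ℕ} (σ : ℝ → ℝ) (hσc : Continuous σ) (hσi : Function.Injective σ)
    (a : Fin d → ℝ) (c : ℝ) (k₀ : Fin d) (ha : a k₀ ≠ 0) :
    volume {y : Fin d → ℝ | ∑ k, a k * σ (y k) = c} = 0 := by
  cases d with
  | zero => exact k₀.elim0
  | succ m =>
    set S := {y : Fin (m+1) → ℝ | ∑ k, a k * σ (y k) = c} with hS
    have hScl : IsClosed S := isClosed_eq (by fun_prop) continuous_const
    have hSmeas : MeasurableSet S := hScl.measurableSet
    set e := MeasurableEquiv.piFinSuccAbove (fun _ : Fin (m+1) => ℝ) k₀ with he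
    have mp := measurePreserving_piFinSuccAbove (fun _ : Fin (m+1) => (volume : Measure ℝ)) k₀
    set ν := Measure.pi fun _ : Fin m => (volume : Measure ℝ) with hν
    have hP : MeasurableSet (e.symm ⁻¹' S) := e.symm.measurable hSmeas
    have h1 : (Measure.pi fun _ : Fin (m+1) => (volume : Measure ℝ)) S
        = ((volume : Measure ℝ).prod ν) (e.symm ⁻¹' S) :=
      ((mp.symm e).measure_preimage hSmeas.nullMeasurableSet).symm
    have h2 : ((volume : Measure ℝ).prod ν) (e.symm ⁻¹' S)
        = (ν.prod (volume : Measure ℝ)) (Prod.swap ⁻¹' (e.symm ⁻¹' S)) := by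
      rw [← Measure.prod_swap, Measure.map_apply measurable_swap hP]
    have h3 : (ν.prod (volume : Measure ℝ)) (Prod.swap ⁻¹' (e.symm ⁻¹' S)) = 0 := by
      rw [Measure.measure_prod_null (measurable_swap hP)]
      refine Filter.Eventually.of_forall (fun v => ?_)
      have hsub : {x : ℝ | (v, x) ∈ Prod.swap ⁻¹' (e.symm ⁻¹' S)}.Subsingleton := by
        intro x₁ hx₁ x₂ hx₂
        simp only [Set.mem_setOf_eq, Set.mem_preimage, hS, Prod.swap] at hx₁ hx₂
        have key : ∀ x : ℝ, (∑ k, a k * σ (e.symm (x, v) k) = c) ↔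
            a k₀ * σ x + ∑ j, a (k₀.succAbove j) * σ (v j) = c := by
          intro x
          have hxv : e.symm (x, v) = k₀.insertNth x v := rfl
          rw [hxv, Fin.sum_univ_succAbove _ k₀]
          simp
        rw [key] at hx₁ hx₂
        have : a k₀ * σ x₁ = a k₀ * σ x₂ := by linarith
        exact hσi (mul_left_cancel₀ ha this)
      exact hsub.measure_zero _
    rw [MeasureTheory.volume_pi, h1, h2, h3]

lemma lemC {d : ℕ} (σ : ℝ → ℝ) (hσc : Continuous σ) (hσi : Function.Injective σ)
    (μ : Measure (Fin d → ℝ)) (hac : μ ≪ volume)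
    (W : Submodule ℝ (Fin d → ℝ)) (hW : W ≠ ⊤) :
    μ {y : Fin d → ℝ | (fun k => σ (y k)) ∈ W} = 0 := by
  obtain ⟨φ, hφ0, hφW⟩ :=
    Submodule.exists_dual_map_eq_bot_of_lt_top (p := W) hW.lt_top inferInstance
  have hrepr : ∀ x : Fin d → ℝ, φ x = ∑ k, φ (Pi.single k 1) * x k := by
    intro x
    conv_lhs => rw [← Finset.univ_sum_single x]
    rw [map_sum]
    congr 1
    ext k
    have : Pi.single k (x k) = x k • (Pi.single k 1 : Fin d → ℝ) := by
      ext j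
      by_cases h : j = k <;> simp [Pi.single_apply, h, mul_comm]
    rw [this, _root_.map_smul, smul_eq_mul, mul_comm]
  have ha : ∃ k₀, φ (Pi.single k₀ (1:ℝ)) ≠ 0 := by
    by_contra h
    push_neg at h
    apply hφ0
    ext x
    simp [hrepr x, h]
  obtain ⟨k₀, hk₀⟩ := ha
  have hWker : ∀ w ∈ W, φ w = 0 := by
    intro w hw
    have : φ w ∈ W.map φ := Submodule.mem_map_of_mem hw
    rwa [hφW, Submodule.mem_bot] at this
  refine measure_mono_null (fun y hy => ?_) (hac (lemB σ hσc hσi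
    (fun k => φ (Pi.single k 1)) 0 k₀ hk₀))
  have := hWker _ hy
  rw [hrepr] at this
  simpa using this

lemma main_aux {d : ℕ} (σ : ℝ → ℝ) (hσc : Continuous σ) (hσi : Function.Injective σ)
    (μ : Measure (Fin d → ℝ)) [IsProbabilityMeasure μ] (hac : μ ≪ volume) :
    ∀ n : ℕ, n ≤ d →
      (Measure.pi fun _ : Fin n => μ)
        {y : Fin n → (Fin d → ℝ) |
          ¬ LinearIndependent ℝ (fun i : Fin n => fun k : Fin d => σ (y i k))} = 0 := by
  have hmeas : ∀ m : ℕ, MeasurableSet {y : Fin m → (Fin d → ℝ) |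
      ¬ LinearIndependent ℝ (fun i : Fin m => fun k : Fin d => σ (y i k))} := by
    intro m
    have hcont : Continuous (fun y : Fin m → (Fin d → ℝ) =>
        (fun i : Fin m => fun k : Fin d => σ (y i k))) := by fun_prop
    have : {y : Fin m → (Fin d → ℝ) |
        ¬ LinearIndependent ℝ (fun i : Fin m => fun k : Fin d => σ (y i k))} =
        ((fun y : Fin m → (Fin d → ℝ) => (fun i : Fin m => fun k : Fin d => σ (y i k))) ⁻¹'
          {g : Fin m → (Fin d → ℝ) | LinearIndependent ℝ g})ᶜ := rfl
    rw [this]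
    exact ((isOpen_setOf_linearIndependent.preimage hcont).measurableSet).compl
  intro n
  induction n with
  | zero =>
    intro _
    have : {y : Fin 0 → (Fin d → ℝ) |
        ¬ LinearIndependent ℝ (fun i : Fin 0 => fun k : Fin d => σ (y i k))} = ∅ := by
      ext y
      simp [linearIndependent_empty_type]
    rw [this, measure_empty]
  | succ n ih =>
    intro hnd
    have hnd' : n ≤ d := Nat.le_of_succ_le hnd
    set f : (Fin d → ℝ) → (Fin d → ℝ) := fun x k => σ (x k) with hf
    set B := {y : Fin (n+1) → (Fin d → ℝ) |
      ¬ LinearIndependent ℝ (fun i : Fin (n+1) => fun k : Fin d => σ (y i k))} with hB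
    set Bn := {y : Fin n → (Fin d → ℝ) |
      ¬ LinearIndependent ℝ (fun i : Fin n => fun k : Fin d => σ (y i k))} with hBn
    set ν := Measure.pi fun _ : Fin n => μ with hν
    set e := MeasurableEquiv.piFinSuccAbove (fun _ : Fin (n+1) => (Fin d → ℝ)) 0 with he
    have mp := measurePreserving_piFinSuccAbove (fun _ : Fin (n+1) => μ) 0
    have hP : MeasurableSet (e.symm ⁻¹' B) := e.symm.measurable (hmeas (n+1))
    have h1 : (Measure.pi fun _ : Fin (n+1) => μ) B = (μ.prod ν) (e.symm ⁻¹' B) :=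
      ((mp.symm e).measure_preimage (hmeas (n+1)).nullMeasurableSet).symm
    -- membership characterization
    have hmem : ∀ x v, ((x, v) ∈ e.symm ⁻¹' B ↔
        ¬ LinearIndependent ℝ (Fin.cons (f x) (fun i => f (v i)))) := by
      intro x v
      have h2 : e.symm (x, v) = Fin.cons x v := Fin.insertNth_zero' x v
      simp only [Set.mem_preimage, hB, Set.mem_setOf_eq, h2]
      constructor
      · intro h h'
        apply h
        convert h' using 1
        ext i k
        refine Fin.cases ?_ ?_ i <;> simp [hf]
      · intro h h'
        apply h
        convert h' using 1
        ext i k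
        refine Fin.cases ?_ ?_ i <;> simp [hf]
    set P₁ := (Set.univ : Set (Fin d → ℝ)) ×ˢ Bn with hP₁
    have hP₁meas : MeasurableSet P₁ := MeasurableSet.univ.prod (hmeas n)
    have hP₁null : (μ.prod ν) P₁ = 0 := by
      rw [Measure.prod_prod, ih hnd', mul_zero]
    set P₂ := (e.symm ⁻¹' B) ∩ P₁ᶜ with hP₂
    have hP₂meas : MeasurableSet P₂ := hP.inter hP₁meas.compl
    have hP₂null : (μ.prod ν) P₂ = 0 := by
      have hswap : (μ.prod ν) P₂ = (ν.prod μ) (Prod.swap ⁻¹' P₂) := by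
        rw [← Measure.prod_swap, Measure.map_apply measurable_swap hP₂meas]
      rw [hswap, Measure.measure_prod_null (measurable_swap hP₂meas)]
      refine Filter.Eventually.of_forall (fun v => ?_)
      simp only [Pi.zero_apply]
      by_cases hv : v ∈ Bn
      · have : {x : Fin d → ℝ | (v, x) ∈ Prod.swap ⁻¹' P₂} = ∅ := by
          ext x
          simp only [Set.mem_preimage, Prod.swap_prod_mk, hP₂, Set.mem_inter_iff,
            Set.mem_compl_iff, hP₁, Set.mem_prod, Set.mem_univ, true_and,
            Set.mem_empty_iff_false, iff_false, Set.mem_setOf_eq]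
          intro h
          exact h.2 hv
        rw [show (Prod.mk v ⁻¹' (Prod.swap ⁻¹' P₂)) = ∅ from this, measure_empty]
      · -- LI (f ∘ v); slice contained in span preimage
        have hLI : LinearIndependent ℝ (fun i : Fin n => fun k : Fin d => σ (v i k)) := by
          by_contra h; exact hv h
        set W := Submodule.span ℝ (Set.range (fun i : Fin n => f (v i))) with hW
        have hWne : W ≠ ⊤ := by
          intro htop
          have := finrank_le_of_span_eq_top htop
          rw [Fintype.card_fin] at this
          have hd : Module.finrank ℝ (Fin d → ℝ) = d := by
            simp [Module.finrank_fintype_fun_eq_card]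
          omega
        have hsub : (Prod.mk v ⁻¹' (Prod.swap ⁻¹' P₂)) ⊆ {x : Fin d → ℝ | f x ∈ W} := by
          intro x hx
          simp only [Set.mem_preimage, Prod.swap_prod_mk] at hx
          have hxB := (hmem x v).mp hx.1
          rw [linearIndependent_fin_cons, not_and_or] at hxB
          rcases hxB with h | h
          · exact absurd hLI h
          · simpa [hW, hf] using not_not.mp h
        exact measure_mono_null hsub (lemC σ hσc hσi μ hac W hWne)
    have hsubset : e.symm ⁻¹' B ⊆ P₁ ∪ P₂ := by
      intro p hp
      by_cases hmemP₁ : p ∈ P₁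
      · exact Or.inl hmemP₁
      · exact Or.inr ⟨hp, hmemP₁⟩
    refine le_antisymm ?_ zero_le
    calc (Measure.pi fun _ : Fin (n+1) => μ) B = (μ.prod ν) (e.symm ⁻¹' B) := h1
      _ ≤ (μ.prod ν) P₁ + (μ.prod ν) P₂ :=
          le_trans (measure_mono hsubset) (measure_union_le _ _)
      _ = 0 := by rw [hP₁null, hP₂null, add_zero]

/-- For σ Lipschitz and strictly increasing and μ absolutely continuous, n ≤ d i.i.d.
samples from μ have, almost surely, linearly independent images under the
componentwise application of σ. -/
theorem generic_linear_independence
    {d n : ℕ} (hn : 1 ≤ n) (hnd : n ≤ d)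
    (σ : ℝ → ℝ) (K : NNReal) (hσ_lip : LipschitzWith K σ) (hσ_mono : StrictMono σ)
    (μ : Measure (Fin d → ℝ)) [IsProbabilityMeasure μ] (hac : μ ≪ volume) :
    (Measure.pi fun _ : Fin n => μ)
      {y : Fin n → (Fin d → ℝ) |
        ¬ LinearIndependent ℝ (fun i : Fin n => fun k : Fin d => σ (y i k))} = 0 :=
  main_aux σ hσ_lip.continuous hσ_mono.injective μ hac n hnd
end

section
/- Let σ : ℝ → ℝ be continuous (applied componentwise to vectors), T > 0, d ≥ n, and y⁽¹⁾,…,y⁽ⁿ⁾ ∈ ℝ^d such that the vectors σ(y⁽¹⁾),…,σ(y⁽ⁿ⁾) are linearly independent. Then there exist ε > 0 and C > 0 such that for all x⁽¹⁾,…,x⁽ⁿ⁾ ∈ ℝ^d with max_i ‖x⁽ⁱ⁾ − y⁽ⁱ⁾‖₁ ≤ ε, there exist a continuous matrix-valued control w : [0,T] → M_{d×d}(ℝ) and C¹ curves x_i : [0,T] → ℝ^d solving ẋ_i(t) = w(t)·σ(x_i(t)), x_i(0) = x⁽ⁱ⁾, x_i(T) = y⁽ⁱ⁾ for all i, with ‖w‖_{C⁰}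 ≤ (C/T)·max_i ‖x⁽ⁱ⁾ − y⁽ⁱ⁾‖₁. -/
open Matrix

attribute [local instance] Matrix.normedAddCommGroup

lemma gram_det_ne_zero {d n : ℕ} (f : Fin n → Fin d → ℝ)
    (hLI : LinearIndependent ℝ f) :
    ((Matrix.of fun k i => f i k)ᵀ * (Matrix.of fun k i => f i k) : Matrix (Fin n) (Fin n) ℝ).det ≠ 0 := by
  intro h
  obtain ⟨v, hv, hGv⟩ := Matrix.exists_mulVec_eq_zero_iff.mpr h
  set Φ : Matrix (Fin d) (Fin n) ℝ := Matrix.of fun k i => f i k with hΦ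
  have h0 : v ⬝ᵥ ((Φᵀ * Φ) *ᵥ v) = 0 := by rw [hGv]; simp
  have h1 : (Φ *ᵥ v) ⬝ᵥ (Φ *ᵥ v) = 0 := by
    rw [← h0, ← Matrix.mulVec_mulVec, Matrix.dotProduct_mulVec v, Matrix.vecMul_transpose]
  have h2 : Φ *ᵥ v = 0 := by
    funext k
    have hsum : ∑ k', (Φ *ᵥ v) k' * (Φ *ᵥ v) k' = 0 := h1
    have := (Finset.sum_eq_zero_iff_of_nonneg (fun k' _ => mul_self_nonneg ((Φ *ᵥ v) k'))).mp
      hsum k (Finset.mem_univ k)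
    have := mul_self_eq_zero.mp this
    simpa using this
  have h3 : ∀ i, v i = 0 := by
    apply Fintype.linearIndependent_iff.mp hLI
    funext k
    have := congrFun h2 k
    simpa [hΦ, Matrix.mulVec, dotProduct, mul_comm, Finset.sum_apply] using this
  exact hv (funext h3)

/-- Local exact controllability with linear-in-parameters vector field ẋ = w(t)σ(x),
with a control bound proportional to the size of the perturbation of the data. -/
theorem local_controllability_linear_field
    {d n : ℕ} (hn : 0 < n) (hnd : n ≤ d) (T : ℝ) (hT : 0 < T)
    (σ : ℝ → ℝ) (hσ : Continuous σ)
    (y : Fin n → (Fin d → ℝ))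
    (hLI : LinearIndependent ℝ (fun i : Fin n => fun k : Fin d => σ (y i k))) :
    ∃ ε > (0 : ℝ), ∃ C > (0 : ℝ), ∀ x : Fin n → (Fin d → ℝ),
      (∀ i, ∑ k, |x i k - y i k| ≤ ε) →
      ∃ w : ℝ → Matrix (Fin d) (Fin d) ℝ, ContinuousOn w (Set.Icc 0 T) ∧
        ∃ γ : Fin n → ℝ → (Fin d → ℝ),
          (∀ i, γ i 0 = x i ∧ γ i T = y i ∧
            ∀ t ∈ Set.Icc (0 : ℝ) T,
              HasDerivAt (γ i) ((w t).mulVec (fun k => σ (γ i t k))) t) ∧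
          ∀ t ∈ Set.Icc (0 : ℝ) T,
            ‖w t‖ ≤ (C / T) *
              Finset.univ.sup' ⟨⟨0, hn⟩, Finset.mem_univ _⟩
                (fun i => ∑ k, |x i k - y i k|) := by
  classical
  set Φf : (Fin n → Fin d → ℝ) → Matrix (Fin d) (Fin n) ℝ :=
    fun P => Matrix.of fun k i => σ (P i k) with hΦf
  set Gf : (Fin n → Fin d → ℝ) → Matrix (Fin n) (Fin n) ℝ :=
    fun P => (Φf P)ᵀ * Φf P with hGf
  have hΦcont : Continuous Φf := continuous_matrix fun k i =>
    hσ.comp ((continuous_apply k).comp (continuous_apply i))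
  have hGcont : Continuous Gf := (hΦcont.matrix_transpose).matrix_mul hΦcont
  have hdet0 : (Gf y).det ≠ 0 := gram_det_ne_zero _ hLI
  have hdetc : Continuous fun P => (Gf P).det := hGcont.matrix_det
  obtain ⟨δ, hδ, hball⟩ : ∃ δ > 0, ∀ P, dist P y < δ → (Gf P).det ≠ 0 := by
    have hopen : IsOpen {P : Fin n → Fin d → ℝ | (Gf P).det ≠ 0} :=
      (isOpen_compl_singleton (x := (0 : ℝ))).preimage hdetc
    rw [Metric.isOpen_iff] at hopen
    obtain ⟨δ, hδ, hb⟩ := hopen y hdet0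
    exact ⟨δ, hδ, fun P hP => hb (Metric.mem_ball.mpr hP)⟩
  set ε := δ / 2 with hεdef
  have hε : 0 < ε := by positivity
  set S : Set (Fin n → Fin d → ℝ) := {P | ∀ i, ∑ k, |P i k - y i k| ≤ ε} with hSdef
  have hSdist : ∀ P ∈ S, dist P y ≤ ε := by
    intro P hP
    rw [dist_pi_le_iff hε.le]
    intro i
    rw [dist_pi_le_iff hε.le]
    intro k
    rw [Real.dist_eq]
    calc |P i k - y i k| ≤ ∑ k', |P i k' - y i k'| :=
          Finset.single_le_sum (f := fun k' => |P i k' - y i k'|) (fun _ _ => abs_nonneg _) (Finset.mem_univ k)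
    _ ≤ ε := hP i
  have hSdet : ∀ P ∈ S, (Gf P).det ≠ 0 := fun P hP =>
    hball P (lt_of_le_of_lt (hSdist P hP) (by rw [hεdef]; linarith))
  have hSclosed : IsClosed S := by
    have : S = ⋂ i, {P : Fin n → Fin d → ℝ | ∑ k, |P i k - y i k| ≤ ε} := by
      ext P; simp [hSdef, Set.mem_iInter]
    rw [this]
    refine isClosed_iInter fun i => isClosed_le ?_ continuous_const
    exact continuous_finset_sum _ fun k _ =>
      ((continuous_apply_apply i k).sub continuous_const).abs
  have hSbdd : Bornology.IsBounded S := by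
    apply (Metric.isBounded_closedBall (x := y) (r := ε)).subset
    intro P hP
    exact Metric.mem_closedBall.mpr (hSdist P hP)
  have hScomp : IsCompact S := Metric.isCompact_of_isClosed_isBounded hSclosed hSbdd
  set Af : (Fin n → Fin d → ℝ) → Matrix (Fin n) (Fin d) ℝ :=
    fun P => (Gf P)⁻¹ * (Φf P)ᵀ with hAfdef
  have hAf_eq : ∀ P ∈ S, Af P = ((Gf P).det)⁻¹ • ((Gf P).adjugate * (Φf P)ᵀ) := by
    intro P hP
    rw [hAfdef]
    simp only
    rw [Matrix.inv_def, Ring.inverse_eq_inv', Matrix.smul_mul]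
  have hAfS : ContinuousOn Af S := by
    have hform : ContinuousOn
        (fun P => ((Gf P).det)⁻¹ • ((Gf P).adjugate * (Φf P)ᵀ)) S := by
      exact (hdetc.continuousOn.inv₀ hSdet).smul
        ((hGcont.matrix_adjugate.matrix_mul hΦcont.matrix_transpose).continuousOn)
    exact hform.congr fun P hP => hAf_eq P hP
  obtain ⟨K, hK⟩ := hScomp.exists_bound_of_continuousOn hAfS
  set K' := max K 0 with hK'def
  have hK'0 : 0 ≤ K' := le_max_right _ _
  set C := (n : ℝ) * (K' + 1) with hCdef
  have hC : 0 < C := by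
    have : (0 : ℝ) < n := by exact_mod_cast hn
    positivity
  refine ⟨ε, hε, C, hC, ?_⟩
  intro x hx
  set Mx := Finset.univ.sup' ⟨⟨0, hn⟩, Finset.mem_univ _⟩
      (fun i => ∑ k, |x i k - y i k|) with hMxdef
  have hxM : ∀ i, ∑ k, |x i k - y i k| ≤ Mx := fun i =>
    Finset.le_sup' (fun i => ∑ k, |x i k - y i k|) (Finset.mem_univ i)
  have hMx0 : 0 ≤ Mx :=
    le_trans (Finset.sum_nonneg fun _ _ => abs_nonneg _) (hxM ⟨0, hn⟩)
  set γ : Fin n → ℝ → Fin d → ℝ :=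
    fun i t k => x i k + (t / T) * (y i k - x i k) with hγdef
  set P : ℝ → (Fin n → Fin d → ℝ) := fun t i => γ i t with hPdef
  have hPS : ∀ t ∈ Set.Icc (0 : ℝ) T, P t ∈ S := by
    intro t ht i
    have ht0 : 0 ≤ t / T := div_nonneg ht.1 hT.le
    have ht1 : t / T ≤ 1 := (div_le_one hT).mpr ht.2
    have h1 : ∀ k, |γ i t k - y i k| = (1 - t / T) * |x i k - y i k| := by
      intro k
      have heq : γ i t k - y i k = (1 - t / T) * (x i k - y i k) := by
        simp only [hγdef]; ring
      rw [heq, abs_mul, abs_of_nonneg (by linarith : (0:ℝ) ≤ 1 - t / T)]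
    calc ∑ k, |P t i k - y i k| = ∑ k, (1 - t / T) * |x i k - y i k| := by
          refine Finset.sum_congr rfl fun k _ => ?_
          exact h1 k
    _ = (1 - t / T) * ∑ k, |x i k - y i k| := by rw [Finset.mul_sum]
    _ ≤ 1 * ∑ k, |x i k - y i k| := by
          apply mul_le_mul_of_nonneg_right (by linarith)
          exact Finset.sum_nonneg fun _ _ => abs_nonneg _
    _ = ∑ k, |x i k - y i k| := one_mul _
    _ ≤ ε := hx i
  set V : Matrix (Fin d) (Fin n) ℝ := Matrix.of fun k i => (y i k - x i k) / T with hVdef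
  set w : ℝ → Matrix (Fin d) (Fin d) ℝ := fun t => V * Af (P t) with hwdef
  have hunit : ∀ t ∈ Set.Icc (0 : ℝ) T, IsUnit (Gf (P t)).det := fun t ht =>
    isUnit_iff_ne_zero.mpr (hSdet _ (hPS t ht))
  have hkey : ∀ t ∈ Set.Icc (0 : ℝ) T, w t * Φf (P t) = V := by
    intro t ht
    calc w t * Φf (P t)
        = V * ((Gf (P t))⁻¹ * ((Φf (P t))ᵀ * Φf (P t))) := by
          rw [hwdef]; simp only [hAfdef]; rw [Matrix.mul_assoc, Matrix.mul_assoc]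
    _ = V * ((Gf (P t))⁻¹ * Gf (P t)) := rfl
    _ = V := by rw [Matrix.nonsing_inv_mul _ (hunit t ht), Matrix.mul_one]
  refine ⟨w, ?_, γ, ?_, ?_⟩
  · -- continuity of w on [0, T]
    have hPc : Continuous P := by
      refine continuous_pi fun i => continuous_pi fun k => ?_
      simp only [hPdef, hγdef]
      exact continuous_const.add (((continuous_id.div_const T)).mul continuous_const)
    have hΦPc : Continuous fun t => Φf (P t) := hΦcont.comp hPc
    have hGPc : Continuous fun t => Gf (P t) := hGcont.comp hPc
    have hne : ∀ t ∈ Set.Icc (0 : ℝ) T, (Gf (P t)).det ≠ 0 := fun t ht =>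
      hSdet _ (hPS t ht)
    have hform : ContinuousOn
        (fun t => V * (((Gf (P t)).det)⁻¹ • ((Gf (P t)).adjugate * (Φf (P t))ᵀ)))
        (Set.Icc 0 T) := by
      have hM : ContinuousOn
          (fun t => ((Gf (P t)).det)⁻¹ • ((Gf (P t)).adjugate * (Φf (P t))ᵀ))
          (Set.Icc 0 T) :=
        ((hGPc.matrix_det).continuousOn.inv₀ hne).smul
          ((hGPc.matrix_adjugate.matrix_mul hΦPc.matrix_transpose).continuousOn)
      exact (continuous_const.matrix_mul continuous_id).comp_continuousOn hM
    refine hform.congr fun t ht => ?_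
    rw [hwdef]
    simp only
    rw [hAf_eq (P t) (hPS t ht), Matrix.mul_smul]
  · -- the curves
    intro i
    refine ⟨?_, ?_, ?_⟩
    · funext k; simp [hγdef]
    · funext k
      simp only [hγdef]
      rw [div_self hT.ne']
      ring
    · intro t ht
      have hde : HasDerivAt (γ i) (fun k => (1 / T) * (y i k - x i k)) t := by
        rw [hasDerivAt_pi]
        intro k
        have h1 : HasDerivAt (fun s : ℝ => s / T) (1 / T) t :=
          (hasDerivAt_id t).div_const T
        have h2 := (h1.mul_const (y i k - x i k)).const_add (x i k)
        exact h2
      have heq : (w t).mulVec (fun k => σ (γ i t k)) =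
          fun k => (1 / T) * (y i k - x i k) := by
        funext k
        have hcol : (w t * Φf (P t)) k i = V k i := by rw [hkey t ht]
        have hlhs : (w t).mulVec (fun k' => σ (γ i t k')) k = (w t * Φf (P t)) k i := by
          simp [Matrix.mulVec, Matrix.mul_apply, dotProduct, hΦf, hPdef]
        rw [hlhs, hcol]
        simp only [hVdef, Matrix.of_apply]
        ring
      rw [heq]
      exact hde
  · -- the norm bound
    intro t ht
    have hA : ‖Af (P t)‖ ≤ K' := le_trans (hK _ (hPS t ht)) (le_max_left _ _)
    have hbound : 0 ≤ C / T * Mx := by positivity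
    rw [Matrix.norm_le_iff hbound]
    intro k l
    have hwkl : w t k l = ∑ j, V k j * Af (P t) j l := by
      rw [hwdef]; simp [Matrix.mul_apply]
    have hVb : ∀ j, |V k j| ≤ Mx / T := by
      intro j
      have : |V k j| = |y j k - x j k| / T := by
        simp only [hVdef, Matrix.of_apply]
        rw [abs_div, abs_of_pos hT]
      rw [this]
      gcongr
      calc |y j k - x j k| = |x j k - y j k| := abs_sub_comm _ _
        _ ≤ ∑ k', |x j k' - y j k'| :=
            Finset.single_le_sum (f := fun k' => |x j k' - y j k'|)
              (fun _ _ => abs_nonneg _) (Finset.mem_univ k)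
        _ ≤ Mx := hxM j
    have hAb : ∀ j, |Af (P t) j l| ≤ K' := fun j =>
      le_trans (Matrix.norm_entry_le_entrywise_sup_norm (Af (P t))) hA
    calc ‖w t k l‖ = |∑ j, V k j * Af (P t) j l| := by rw [hwkl]; exact rfl
    _ ≤ ∑ j, |V k j * Af (P t) j l| := Finset.abs_sum_le_sum_abs _ _
    _ ≤ ∑ _j : Fin n, (Mx / T) * K' := by
        refine Finset.sum_le_sum fun j _ => ?_
        rw [abs_mul]
        exact mul_le_mul (hVb j) (hAb j) (abs_nonneg _) (by positivity)
    _ = (n : ℝ) * ((Mx / T) * K') := by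
        rw [Finset.sum_const, Finset.card_univ, Fintype.card_fin, nsmul_eq_mul]
    _ ≤ C / T * Mx := by
        rw [hCdef]
        have h1 : (n : ℝ) * (Mx / T * K') = ((n : ℝ) * K' / T) * Mx := by ring
        have h2 : ((n : ℝ) * (K' + 1)) / T * Mx = ((n : ℝ) * (K' + 1) / T) * Mx := by ring
        rw [h1, h2]
        apply mul_le_mul_of_nonneg_right ?_ hMx0
        gcongr
        nlinarith [show (0:ℝ) ≤ (n:ℝ) from Nat.cast_nonneg n]
end
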